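/- If Δ is a shellable simplicial complex on n vertices, then its expansion Δ^{(s_1,...,s_n)} is shellable for any positive integers s_1,...,s_n. -/

import Mathlib

open Finset

/-- An (abstract) simplicial complex on vertex set `V`: a downward closed
family of finite subsets of `V`. -/
structure SimplicialComplex (V : Type*) where
  faces : Set (Finset V)
  down_closed : ∀ ⦃F G : Finset V⦄, F ∈ faces → G ⊆ F → G ∈ faces

namespace SimplicialComplex

variable {V : Type*}

/-- A facet is a maximal face. -/
def IsFacet (Δ : SimplicialComplex V) (F : Finset V) : Prop :=
  F ∈ Δ.faces ∧ ∀ G ∈ Δ.faces, F ⊆ G → F = G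

/-- The deletion `del_Δ(x)`. -/
def del [DecidableEq V] (Δ : SimplicialComplex V) (x : V) : SimplicialComplex V where
  faces := {F | F ∈ Δ.faces ∧ x ∉ F}
  down_closed := fun _F _G hF hG => ⟨Δ.down_closed hF.1 hG, fun hx => hF.2 (hG hx)⟩

/-- The link `lk_Δ(x)`. -/
def link [DecidableEq V] (Δ : SimplicialComplex V) (x : V) : SimplicialComplex V where
  faces := {F | x ∉ F ∧ insert x F ∈ Δ.faces}
  down_closed := fun _F _G hF hG =>
    ⟨fun hx => hF.1 (hG hx), Δ.down_closed hF.2 (Finset.insert_subset_insert x hG)⟩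

/-- The simplex `⟨F⟩` on a finite vertex set `F`. -/
def simplex (F : Finset V) : SimplicialComplex V where
  faces := {G | G ⊆ F}
  down_closed := fun _ _ hF hG => hG.trans hF

/-- Vertex decomposability (non-pure sense). -/
inductive IsVertexDecomposable [DecidableEq V] : SimplicialComplex V → Prop
  | simplex (Δ : SimplicialComplex V) (F : Finset V) (h : Δ.faces = {G | G ⊆ F}) :
      IsVertexDecomposable Δ
  | shed (Δ : SimplicialComplex V) (x : V)
      (hdel : IsVertexDecomposable (Δ.del x))
      (hlink : IsVertexDecomposable (Δ.link x))
      (hfacet : ∀ F, (Δ.del x).IsFacet F → Δ.IsFacet F) :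
      IsVertexDecomposable Δ

/-- Shellability (non-pure sense): an ordering `F 0 < F 1 < ⋯` of all the
facets such that for `i < j` there are `v ∈ F j \ F i` and `l < j` with
`F j \ F l = {v}`. -/
def IsShellable [DecidableEq V] (Δ : SimplicialComplex V) : Prop :=
  ∃ (m : ℕ) (F : Fin m → Finset V),
    Function.Injective F ∧
    (∀ G, Δ.IsFacet G ↔ ∃ i, F i = G) ∧
    ∀ i j : Fin m, i < j → ∃ v ∈ F j, v ∉ F i ∧ ∃ l, l < j ∧ F j \ F l = {v}

/-- A simplicial complex is pure if all facets have the same cardinality. -/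
def IsPure (Δ : SimplicialComplex V) : Prop :=
  ∀ F G, Δ.IsFacet F → Δ.IsFacet G → F.card = G.card

/-- The `(s 0, …, s (n-1))`-expansion of a simplicial complex on `{x_0, …, x_(n-1)}`.
The vertex `x_{ij}` (for `1 ≤ j ≤ s i`) is encoded as the pair `(i, s i - j)`;
so the copies of `x i` are the pairs `(i, r)` with `r < s i`.  The faces are
exactly the subsets of the sets `{x_{i₁ r₁}, …, x_{i_k r_k}}` where
`{x_{i₁}, …, x_{i_k}}` is a face (equivalently, a facet) of `Δ`. -/
def expansion {n : ℕ} (Δ : SimplicialComplex (Fin n)) (s : Fin n → ℕ) :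
    SimplicialComplex (Fin n × ℕ) where
  faces := {E | E.image Prod.fst ∈ Δ.faces ∧ (∀ p ∈ E, p.2 < s p.1) ∧
    ∀ p ∈ E, ∀ q ∈ E, p.1 = q.1 → p = q}
  down_closed := fun _E _G hE hG =>
    ⟨Δ.down_closed hE.1 (Finset.image_subset_image hG),
     fun p hp => hE.2.1 p (hG hp),
     fun p hp q hq => hE.2.2 p (hG hp) q (hG hq)⟩

/-- Restriction of a simplicial complex to a subtype of the vertices. -/
def restrict (Δ : SimplicialComplex V) (P : V → Prop) : SimplicialComplex {v // P v} where
  faces := {F | F.map (Function.Embedding.subtype P) ∈ Δ.faces}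
  down_closed := fun _F _G hF hG =>
    Δ.down_closed hF (Finset.map_subset_map.mpr hG)

end SimplicialComplex

namespace ExpAux

open SimplicialComplex

variable {n m : ℕ}

def unLex (p : Fin m ×ₗ Lex (Fin n → ℕ)) : Fin m × (Fin n → ℕ) :=
  ((ofLex p).1, ofLex (ofLex p).2)

lemma unLex_inj : Function.Injective (unLex (n := n) (m := m)) := fun _ _ h => h

lemma unLex_toLex (a : Fin m) (b : Fin n → ℕ) : unLex (toLex (a, toLex b)) = (a, b) := rfl

lemma lex_lt_iff {a b : Fin m ×ₗ Lex (Fin n → ℕ)} :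
    a < b ↔ (unLex a).1 < (unLex b).1 ∨ (unLex a).1 = (unLex b).1 ∧
      (∃ w, (∀ j, j < w → (unLex a).2 j = (unLex b).2 j) ∧ (unLex a).2 w < (unLex b).2 w) := by
  constructor
  · intro h
    rcases Prod.Lex.lt_iff.mp h with h | ⟨h1, h2⟩
    · exact Or.inl h
    · exact Or.inr ⟨h1, h2⟩
  · intro h
    refine Prod.Lex.lt_iff.mpr ?_
    rcases h with h | ⟨h1, h2⟩
    · exact Or.inl h
    · exact Or.inr ⟨h1, h2⟩

/-- a valid choice datum: a function picking a copy of each vertex of `F p.1`. -/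
def Good (s : Fin n → ℕ) (F : Fin m → Finset (Fin n)) (p : Fin m × (Fin n → ℕ)) : Prop :=
  ∀ x, (x ∈ F p.1 → p.2 x < s x) ∧ (x ∉ F p.1 → p.2 x = 0)

/-- the corresponding facet of the expansion. -/
def Ex (F : Fin m → Finset (Fin n)) (p : Fin m × (Fin n → ℕ)) : Finset (Fin n × ℕ) :=
  (F p.1).image fun x => (x, p.2 x)

lemma mem_Ex {F : Fin m → Finset (Fin n)} {q : Fin m × (Fin n → ℕ)} {p : Fin n × ℕ} :
    p ∈ Ex F q ↔ p.1 ∈ F q.1 ∧ q.2 p.1 = p.2 := by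
  simp only [Ex, Finset.mem_image]
  constructor
  · rintro ⟨x, hx, rfl⟩; exact ⟨hx, rfl⟩
  · rintro ⟨h1, h2⟩; exact ⟨p.1, h1, by rw [h2]⟩

lemma image_fst_Ex {F : Fin m → Finset (Fin n)} (q : Fin m × (Fin n → ℕ)) :
    (Ex F q).image Prod.fst = F q.1 := by
  simp [Ex, Finset.image_image, Function.comp_def]

lemma Ex_inj {s : Fin n → ℕ} {F : Fin m → Finset (Fin n)} (hF : Function.Injective F)
    {q q' : Fin m × (Fin n → ℕ)} (hq : Good s F q) (hq' : Good s F q')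
    (h : Ex F q = Ex F q') : q = q' := by
  have h1 : F q.1 = F q'.1 := by rw [← image_fst_Ex (F := F) q, h, image_fst_Ex]
  have h2 : q.1 = q'.1 := hF h1
  have h3 : q.2 = q'.2 := by
    funext x
    by_cases hx : x ∈ F q.1
    · have : (x, q.2 x) ∈ Ex F q' := h ▸ mem_Ex.mpr ⟨hx, rfl⟩
      exact (mem_Ex.mp this).2.symm
    · rw [(hq x).2 hx, (hq' x).2 (by rwa [← h1])]
  exact Prod.ext h2 h3

lemma Ex_face {Δ : SimplicialComplex (Fin n)} {s : Fin n → ℕ} {F : Fin m → Finset (Fin n)}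
    {q : Fin m × (Fin n → ℕ)} (hq : Good s F q) (hface : F q.1 ∈ Δ.faces) :
    Ex F q ∈ (Δ.expansion s).faces := by
  refine ⟨by rw [image_fst_Ex]; exact hface, ?_, ?_⟩
  · intro p hp
    obtain ⟨h1, h2⟩ := mem_Ex.mp hp
    rw [← h2]; exact (hq p.1).1 h1
  · intro p hp r hr hpr
    obtain ⟨h1, h2⟩ := mem_Ex.mp hp
    obtain ⟨h3, h4⟩ := mem_Ex.mp hr
    exact Prod.ext hpr (by rw [← h2, ← h4, hpr])

lemma Ex_facet {Δ : SimplicialComplex (Fin n)} {s : Fin n → ℕ} {F : Fin m → Finset (Fin n)}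
    {q : Fin m × (Fin n → ℕ)} (hq : Good s F q) (hfac : Δ.IsFacet (F q.1)) :
    (Δ.expansion s).IsFacet (Ex F q) := by
  refine ⟨Ex_face hq hfac.1, ?_⟩
  intro G hG hsub
  have himg : F q.1 = G.image Prod.fst := by
    refine hfac.2 _ hG.1 ?_
    rw [← image_fst_Ex (F := F) q]
    exact Finset.image_subset_image hsub
  refine Finset.Subset.antisymm hsub ?_
  intro p hp
  have h1 : p.1 ∈ F q.1 := by
    rw [himg]; exact Finset.mem_image_of_mem _ hp
  have h2 : (p.1, q.2 p.1) ∈ G := hsub (mem_Ex.mpr ⟨h1, rfl⟩)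
  have := hG.2.2 p hp _ h2 rfl
  rw [this]
  exact mem_Ex.mpr ⟨h1, rfl⟩

/-- every face of `Δ` on a finite vertex type is contained in a facet -/
lemma exists_facet_superset (Δ : SimplicialComplex (Fin n)) {G : Finset (Fin n)}
    (hG : G ∈ Δ.faces) : ∃ H, Δ.IsFacet H ∧ G ⊆ H := by
  have hfin : ({H : Finset (Fin n) | H ∈ Δ.faces ∧ G ⊆ H}).Finite :=
    Set.toFinite _
  obtain ⟨H, hH, hmax⟩ := Set.Finite.exists_maximalFor Finset.card _ hfin ⟨G, hG, Finset.Subset.refl G⟩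
  refine ⟨H, ⟨hH.1, ?_⟩, hH.2⟩
  intro H' hH' hsub
  have : H.card = H'.card := le_antisymm (Finset.card_le_card hsub) (hmax ⟨hH', hH.2.trans hsub⟩ (Finset.card_le_card hsub))
  exact Finset.eq_of_subset_of_card_le hsub this.ge


/-- every facet of the expansion is of the form `Ex F q` for a good `q`. -/
lemma facet_exists {Δ : SimplicialComplex (Fin n)} {s : Fin n → ℕ} {F : Fin m → Finset (Fin n)}
    (hs : ∀ i, 0 < s i) (hfac : ∀ G, Δ.IsFacet G ↔ ∃ i, F i = G)
    {Et : Finset (Fin n × ℕ)} (hE : (Δ.expansion s).IsFacet Et) :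
    ∃ q, Good s F q ∧ Ex F q = Et := by
  obtain ⟨⟨hface, hbound, huniq⟩, hmaxE⟩ := hE
  set G := Et.image Prod.fst with hGdef
  -- G is a facet of Δ
  have hGfacet : Δ.IsFacet G := by
    obtain ⟨H, hH, hGH⟩ := exists_facet_superset Δ hface
    have hHG : H = G := by
      classical
      set Et' := Et ∪ (H \ G).image (fun x => (x, 0)) with hEt'
      have hface' : Et' ∈ (Δ.expansion s).faces := by
        refine ⟨?_, ?_, ?_⟩
        · have : Et'.image Prod.fst = H := by
            rw [hEt', Finset.image_union, Finset.image_image]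
            have : ((H \ G).image fun x => (Prod.fst ∘ fun x => ((x : Fin n), (0:ℕ))) x) = H \ G := by
              simp [Function.comp_def]
            rw [this, ← hGdef]
            rw [Finset.union_sdiff_of_subset hGH]
          rw [this]; exact hH.1
        · intro p hp
          rcases Finset.mem_union.mp hp with hp | hp
          · exact hbound p hp
          · obtain ⟨x, _, rfl⟩ := Finset.mem_image.mp hp
            exact hs x
        · intro p hp r hr hpr
          rcases Finset.mem_union.mp hp with hp | hp <;>
            rcases Finset.mem_union.mp hr with hr | hr
          · exact huniq p hp r hr hpr
          · obtain ⟨x, hx, rfl⟩ := Finset.mem_image.mp hr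
            exfalso
            have : p.1 ∈ G := Finset.mem_image_of_mem _ hp
            rw [hpr] at this
            exact (Finset.mem_sdiff.mp hx).2 this
          · obtain ⟨x, hx, rfl⟩ := Finset.mem_image.mp hp
            exfalso
            have : r.1 ∈ G := Finset.mem_image_of_mem _ hr
            rw [← hpr] at this
            exact (Finset.mem_sdiff.mp hx).2 this
          · obtain ⟨x, hx, rfl⟩ := Finset.mem_image.mp hp
            obtain ⟨y, hy, rfl⟩ := Finset.mem_image.mp hr
            simp only at hpr
            rw [hpr]
      have heq : Et = Et' := hmaxE Et' hface' Finset.subset_union_left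
      have hsub : H \ G ⊆ G := by
        intro x hx
        have : (x, 0) ∈ Et := by
          rw [heq, hEt']
          exact Finset.mem_union_right _ (Finset.mem_image_of_mem _ hx)
        exact Finset.mem_image_of_mem Prod.fst this
      have : H \ G = ∅ := by
        rw [Finset.eq_empty_iff_forall_notMem]
        intro x hx
        exact (Finset.mem_sdiff.mp hx).2 (hsub hx)
      have hHsubG : H ⊆ G := by
        intro x hx
        by_contra hxG
        exact Finset.eq_empty_iff_forall_notMem.mp this x (Finset.mem_sdiff.mpr ⟨hx, hxG⟩)
      exact Finset.Subset.antisymm hHsubG hGH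
    rwa [hHG] at hH
  obtain ⟨i, hi⟩ := (hfac G).mp hGfacet
  classical
  set r : Fin n → ℕ := fun x => if h : ∃ k, (x, k) ∈ Et then h.choose else 0 with hrdef
  have hr_mem : ∀ {x k}, (x, k) ∈ Et → r x = k := by
    intro x k hk
    have h : ∃ k, (x, k) ∈ Et := ⟨k, hk⟩
    have := huniq _ h.choose_spec _ hk rfl
    simp only [hrdef, dif_pos h]
    exact (Prod.ext_iff.mp this).2
  have hr_zero : ∀ {x}, x ∉ G → r x = 0 := by
    intro x hx
    have h : ¬ ∃ k, (x, k) ∈ Et := by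
      rintro ⟨k, hk⟩
      exact hx (Finset.mem_image_of_mem Prod.fst hk)
    simp only [hrdef, dif_neg h]
  have hmemG : ∀ {x}, x ∈ G → (x, r x) ∈ Et := by
    intro x hx
    obtain ⟨p, hp, hpx⟩ := Finset.mem_image.mp hx
    have hp' : (x, p.2) ∈ Et := by rw [← hpx]; exact Prod.mk.eta ▸ hp
    rw [hr_mem hp']
    exact hp'
  refine ⟨(i, r), ?_, ?_⟩
  · intro x
    constructor
    · intro hx
      rw [hi] at hx
      have := hmemG hx
      exact hbound _ this
    · intro hx
      rw [hi] at hx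
      exact hr_zero hx
  · apply Finset.Subset.antisymm
    · intro p hp
      obtain ⟨h1, h2⟩ := mem_Ex.mp hp
      simp only at h1 h2
      rw [hi] at h1
      have := hmemG h1
      rw [h2] at this
      exact (Prod.mk.eta (p := p)) ▸ this
    · intro p hp
      refine mem_Ex.mpr ⟨?_, ?_⟩
      · simp only [hi]
        exact Finset.mem_image_of_mem Prod.fst hp
      · exact hr_mem ((Prod.mk.eta (p := p)).symm ▸ hp)

noncomputable instance (n : ℕ) : LinearOrder (Lex (Fin n → ℕ)) :=
  @Pi.Lex.linearOrder (Fin n) (fun _ => ℕ) _ (Finite.to_wellFoundedLT) _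

/-- The (linearly ordered, finite) index type of facets of the expansion. -/
abbrev Idx (s : Fin n → ℕ) (F : Fin m → Finset (Fin n)) : Type :=
  {p : Fin m ×ₗ Lex (Fin n → ℕ) // Good s F (unLex p)}

noncomputable instance (s : Fin n → ℕ) (F : Fin m → Finset (Fin n)) : Fintype (Idx s F) := by
  apply Fintype.ofInjective
    (fun q : Idx s F => (((unLex q.1).1 : Fin m),
      fun x => (⟨(unLex q.1).2 x, by
        by_cases hx : x ∈ F (unLex q.1).1
        · exact Nat.lt_succ_of_lt ((q.2 x).1 hx)
        · rw [(q.2 x).2 hx]; exact Nat.succ_pos _⟩ : Fin (s x + 1))))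
  intro a b h
  dsimp only at h
  have h1 := congrArg Prod.fst h
  have h2 := congrArg Prod.snd h
  dsimp only at h1 h2
  have h3 : (unLex a.1).2 = (unLex b.1).2 := by
    funext x
    exact congrArg Fin.val (congrFun h2 x)
  exact Subtype.ext (unLex_inj (Prod.ext h1 h3))

end ExpAux


open SimplicialComplex ExpAux in
/-- if `Δ` is a shellable simplicial complex on `n` vertices, then
its expansion `Δ^{(s₁,…,sₙ)}` is shellable for any positive integers `s₁,…,sₙ`. -/
theorem expansion_isShellable {n : ℕ} (Δ : SimplicialComplex (Fin n))
    (s : Fin n → ℕ) (hs : ∀ i, 0 < s i) (hΔ : Δ.IsShellable) :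
    (Δ.expansion s).IsShellable := by
  classical
  obtain ⟨m, F, hFinj, hfac, hshell⟩ := hΔ
  have e := monoEquivOfFin (Idx s F) (Eq.refl (Fintype.card (Idx s F)))
  refine ⟨Fintype.card (Idx s F), fun k => Ex F (unLex (e k).1), ?_, ?_, ?_⟩
  · intro k k' h
    have : unLex (e k).1 = unLex (e k').1 :=
      Ex_inj hFinj (e k).2 (e k').2 h
    exact e.injective (Subtype.ext (unLex_inj this))
  · intro G
    constructor
    · intro hG
      obtain ⟨q, hq, hEq⟩ := facet_exists hs hfac hG
      refine ⟨e.symm ⟨toLex (q.1, toLex q.2), ?_⟩, ?_⟩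
      · rw [unLex_toLex]; exact hq
      · simp only [OrderIso.apply_symm_apply]
        exact hEq
    · rintro ⟨k, rfl⟩
      exact Ex_facet (e k).2 ((hfac _).mpr ⟨(unLex (e k).1).1, rfl⟩)
  · intro k k' hkk'
    set q := unLex (e k).1 with hq
    set q' := unLex (e k').1 with hq'
    have hGq : Good s F q := (e k).2
    have hGq' : Good s F q' := (e k').2
    have hlt : (e k).1 < (e k').1 := e.strictMono hkk'
    rcases lex_lt_iff.mp hlt with h | ⟨h1, w, hw1, hw2⟩
    · -- different base facets
      obtain ⟨v, hv1, hv2, l₀, hl₀, hsd⟩ := hshell q.1 q'.1 h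
      have hvnotl : v ∉ F l₀ := by
        have : v ∈ F q'.1 \ F l₀ := by rw [hsd]; exact Finset.mem_singleton_self v
        exact (Finset.mem_sdiff.mp this).2
      set r'' : Fin n → ℕ := fun x => if x ∈ F l₀ ∧ x ∈ F q'.1 then q'.2 x else 0 with hr''
      have hGood'' : Good s F (l₀, r'') := by
        intro x
        constructor
        · intro hx
          show (if x ∈ F l₀ ∧ x ∈ F q'.1 then q'.2 x else 0) < s x
          by_cases hx' : x ∈ F q'.1
          · have hc : x ∈ F l₀ ∧ x ∈ F q'.1 := ⟨hx, hx'⟩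
            rw [if_pos hc]
            exact (hGq' x).1 hx'
          · rw [if_neg (fun hh : x ∈ F l₀ ∧ x ∈ F q'.1 => hx' hh.2)]
            exact hs x
        · intro hx
          show (if x ∈ F l₀ ∧ x ∈ F q'.1 then q'.2 x else 0) = 0
          rw [if_neg (fun hh : x ∈ F l₀ ∧ x ∈ F q'.1 => hx hh.1)]
      have hGood''' : Good s F (unLex (toLex (l₀, toLex r''))) := by
        rw [unLex_toLex]; exact hGood''
      refine ⟨(v, q'.2 v), mem_Ex.mpr ⟨hv1, rfl⟩, ?_, ?_⟩
      · intro hmem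
        exact hv2 (mem_Ex.mp hmem).1
      · refine ⟨e.symm ⟨toLex ((l₀, toLex r'') : Fin m × Lex (Fin n → ℕ)), hGood'''⟩, ?_, ?_⟩
        · have hplt : (⟨toLex ((l₀, toLex r'') : Fin m × Lex (Fin n → ℕ)), hGood'''⟩ : Idx s F) < e k' :=
            Subtype.mk_lt_mk.mpr (lex_lt_iff.mpr (Or.inl (by rw [unLex_toLex]; exact hl₀)))
          have := e.symm.strictMono hplt
          rwa [OrderIso.symm_apply_apply] at this
        · simp only [OrderIso.apply_symm_apply]
          ext p
          simp only [Finset.mem_sdiff, Finset.mem_singleton]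
          constructor
          · rintro ⟨hp1, hp2⟩
            obtain ⟨hm1, hm2⟩ := mem_Ex.mp hp1
            by_cases hpv : p.1 = v
            · exact Prod.ext hpv (by rw [← hm2, hpv])
            · exfalso
              have hpl : p.1 ∈ F l₀ := by
                by_contra hnl
                have : p.1 ∈ F q'.1 \ F l₀ := Finset.mem_sdiff.mpr ⟨hm1, hnl⟩
                rw [hsd] at this
                exact hpv (Finset.mem_singleton.mp this)
              refine hp2 (mem_Ex.mpr ⟨hpl, ?_⟩)
              show (if p.1 ∈ F l₀ ∧ p.1 ∈ F q'.1 then q'.2 p.1 else 0) = p.2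
              have hc : p.1 ∈ F l₀ ∧ p.1 ∈ F q'.1 := ⟨hpl, hm1⟩
              rw [if_pos hc]
              exact hm2
          · rintro rfl
            refine ⟨mem_Ex.mpr ⟨hv1, rfl⟩, ?_⟩
            intro hmem
            exact hvnotl (mem_Ex.mp hmem).1
    · -- same base facet, lexicographically smaller choice
      have hwF : w ∈ F q'.1 := by
        by_contra hwn
        rw [(hGq' w).2 hwn] at hw2
        exact Nat.not_lt_zero _ hw2
      set r'' : Fin n → ℕ := Function.update q'.2 w (q.2 w) with hr''
      have hGood'' : Good s F (q'.1, r'') := by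
        intro x
        constructor
        · intro hx
          show Function.update q'.2 w (q.2 w) x < s x
          by_cases hxw : x = w
          · subst hxw
            rw [Function.update_self]
            exact lt_trans hw2 ((hGq' x).1 hx)
          · rw [Function.update_of_ne hxw]
            exact (hGq' x).1 hx
        · intro hx
          have hxw : x ≠ w := fun hh => hx (by rw [hh]; exact hwF)
          show Function.update q'.2 w (q.2 w) x = 0
          rw [Function.update_of_ne hxw]
          exact (hGq' x).2 hx
      have hGood''' : Good s F (unLex (toLex (q'.1, toLex r''))) := by
        rw [unLex_toLex]; exact hGood''
      refine ⟨(w, q'.2 w), mem_Ex.mpr ⟨hwF, rfl⟩, ?_, ?_⟩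
      · intro hmem
        obtain ⟨hm1, hm2⟩ := mem_Ex.mp hmem
        exact ne_of_lt hw2 hm2
      · refine ⟨e.symm ⟨toLex ((q'.1, toLex r'') : Fin m × Lex (Fin n → ℕ)), hGood'''⟩, ?_, ?_⟩
        · have hplt : (⟨toLex ((q'.1, toLex r'') : Fin m × Lex (Fin n → ℕ)), hGood'''⟩ : Idx s F) < e k' := by
            refine Subtype.mk_lt_mk.mpr (lex_lt_iff.mpr (Or.inr ⟨rfl, w, ?_, ?_⟩))
            · intro j hj
              rw [unLex_toLex]
              show Function.update q'.2 w (q.2 w) j = q'.2 j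
              rw [Function.update_of_ne (ne_of_lt hj)]
            · rw [unLex_toLex]
              show Function.update q'.2 w (q.2 w) w < q'.2 w
              rw [Function.update_self]
              exact hw2
          have := e.symm.strictMono hplt
          rwa [OrderIso.symm_apply_apply] at this
        · simp only [OrderIso.apply_symm_apply]
          ext p
          simp only [Finset.mem_sdiff, Finset.mem_singleton]
          constructor
          · rintro ⟨hp1, hp2⟩
            obtain ⟨hm1, hm2⟩ := mem_Ex.mp hp1
            by_cases hpw : p.1 = w
            · exact Prod.ext hpw (by rw [← hm2, hpw])
            · exfalso
              refine hp2 (mem_Ex.mpr ⟨hm1, ?_⟩)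
              show Function.update q'.2 w (q.2 w) p.1 = p.2
              rw [Function.update_of_ne hpw]
              exact hm2
          · rintro rfl
            refine ⟨mem_Ex.mpr ⟨hwF, rfl⟩, ?_⟩
            intro hmem
            obtain ⟨hm1, hm2⟩ := mem_Ex.mp hmem
            have : Function.update q'.2 w (q.2 w) w = q'.2 w := hm2
            rw [Function.update_self] at this
            exact ne_of_lt hw2 this
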